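/- Let F be a field and E = F[X]/(X² − tX + 1) a quadratic field extension of F generated by an element β with β² − tβ + 1 = 0, embedded in Mat_2(F) as a torus T(F) ≅ E^×. Then GL_2(F) decomposes as a disjoint union over α ∈ F^×/(F^×)² of double cosets T(F)·diag(α,1)·P_1(F), where P_1(F) is the group of upper triangular matrices of determinant 1. Moreover for each α, the quotient T(F)\T(F)·diag(α,1)·P_1(F) is in bijection with {±1}\P_1(F). -/

import Mathlib

open Matrix

lemma aux_no_root {F : Type*} [Field F] {t : F}
    (hirr : Irreducible (Polynomial.X ^ 2 - Polynomial.C t * Polynomial.X + 1 : Polynomial F)) :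
    ∀ r : F, r ^ 2 - t * r + 1 ≠ 0 := by
  intro r hr
  have hroot : (Polynomial.X ^ 2 - Polynomial.C t * Polynomial.X + 1 : Polynomial F).IsRoot r := by
    simpa [Polynomial.IsRoot] using hr
  obtain ⟨Q, hQ⟩ := Polynomial.dvd_iff_isRoot.mpr hroot
  rcases hirr.2 hQ with h | h
  · exact (Polynomial.not_isUnit_X_sub_C r) h
  · have hdeg : (Polynomial.X ^ 2 - Polynomial.C t * Polynomial.X + 1 : Polynomial F).natDegree = 2 := by
      compute_degree!
    have hQ0 : Q ≠ 0 := by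
      rintro rfl
      rw [mul_zero] at hQ
      exact hirr.ne_zero hQ
    have h2 : (2:ℕ) = 1 + Q.natDegree := by
      rw [← hdeg, hQ, Polynomial.natDegree_mul (Polynomial.X_sub_C_ne_zero r) hQ0,
        Polynomial.natDegree_X_sub_C]
    have := Polynomial.natDegree_eq_zero_of_isUnit h
    omega

lemma aux_smul_form {F : Type*} [Field F] (t a b : F) :
    a • (1 : Matrix (Fin 2) (Fin 2) F) + b • !![t, -1; 1, 0] = !![a + b*t, -b; b, a] := by
  ext i j
  fin_cases i <;> fin_cases j <;> simp [Matrix.one_apply]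

lemma aux_diag {F : Type*} [Field F] (x : F) :
    (Matrix.diagonal ![x, 1] : Matrix (Fin 2) (Fin 2) F) = !![x, 0; 0, 1] := by
  ext i j
  fin_cases i <;> fin_cases j <;> simp [Matrix.diagonal]

lemma aux_torus_diag {F : Type*} [Field F] (t a b x : F) :
    (!![a + b*t, -b; b, a] * Matrix.diagonal ![x, 1] : Matrix (Fin 2) (Fin 2) F)
      = !![(a + b*t)*x, -b; b*x, a] := by
  rw [aux_diag, Matrix.mul_fin_two]
  norm_num

/-- Double coset decomposition `GL₂(F) = ⊔_{α ∈ F^×/(F^×)²} T(F)·diag(α,1)·P₁(F)` for the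
non-split torus `T = F[γ]^×` attached to an irreducible polynomial `X² - tX + 1`, together
with the identification `T(F)\T(F)·diag(α,1)·P₁(F) ≃ {±1}\P₁(F)`. -/
theorem stmt_4 (F : Type*) [Field F] (hchar : (2 : F) ≠ 0) (t : F)
    (hirr : Irreducible (Polynomial.X ^ 2 - Polynomial.C t * Polynomial.X + 1 : Polynomial F)) :
    let γ : Matrix (Fin 2) (Fin 2) F := !![t, -1; 1, 0]
    let T : Set (Matrix (Fin 2) (Fin 2) F)ˣ :=
      {x | ∃ a b : F, (x : Matrix (Fin 2) (Fin 2) F)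
          = a • (1 : Matrix (Fin 2) (Fin 2) F) + b • γ}
    let P₁ : Set (Matrix (Fin 2) (Fin 2) F)ˣ :=
      {p | (p : Matrix (Fin 2) (Fin 2) F) 1 0 = 0 ∧ (p : Matrix (Fin 2) (Fin 2) F).det = 1}
    -- every element of GL₂(F) lies in some double coset T·diag(α,1)·P₁
    (∀ g : (Matrix (Fin 2) (Fin 2) F)ˣ,
      ∃ (τ p : (Matrix (Fin 2) (Fin 2) F)ˣ) (α : Fˣ), τ ∈ T ∧ p ∈ P₁ ∧
        (g : Matrix (Fin 2) (Fin 2) F)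
          = (τ : Matrix (Fin 2) (Fin 2) F) * Matrix.diagonal ![(α : F), 1] *
            (p : Matrix (Fin 2) (Fin 2) F)) ∧
    -- the square class of α is uniquely determined (disjointness of the union)
    (∀ (τ τ' p p' : (Matrix (Fin 2) (Fin 2) F)ˣ) (α α' : Fˣ),
      τ ∈ T → τ' ∈ T → p ∈ P₁ → p' ∈ P₁ →
      (τ : Matrix (Fin 2) (Fin 2) F) * Matrix.diagonal ![(α : F), 1] *
          (p : Matrix (Fin 2) (Fin 2) F)
        = (τ' : Matrix (Fin 2) (Fin 2) F) * Matrix.diagonal ![(α' : F), 1] *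
          (p' : Matrix (Fin 2) (Fin 2) F) →
      ∃ c : Fˣ, (α' : F) = (α : F) * (c : F) ^ 2) ∧
    -- T\T·diag(α,1)·P₁ is in bijection with {±1}\P₁
    (∀ (α : Fˣ) (p p' : (Matrix (Fin 2) (Fin 2) F)ˣ), p ∈ P₁ → p' ∈ P₁ →
      ((∃ τ ∈ T, Matrix.diagonal ![(α : F), 1] * (p' : Matrix (Fin 2) (Fin 2) F)
          = (τ : Matrix (Fin 2) (Fin 2) F) * Matrix.diagonal ![(α : F), 1] *
            (p : Matrix (Fin 2) (Fin 2) F)) ↔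
        ((p' : Matrix (Fin 2) (Fin 2) F) = (p : Matrix (Fin 2) (Fin 2) F) ∨
         (p' : Matrix (Fin 2) (Fin 2) F) = -(p : Matrix (Fin 2) (Fin 2) F)))) := by
  intro γ T P₁
  have hγ : γ = !![t, -1; 1, 0] := rfl
  have noroot := aux_no_root hirr
  have hnorm : ∀ a b : F, ¬(a = 0 ∧ b = 0) → a^2 + a*b*t + b^2 ≠ 0 := by
    intro a b hab h0
    rcases eq_or_ne b 0 with hb0 | hb0
    · subst hb0
      have ha : a ≠ 0 := fun ha => hab ⟨ha, rfl⟩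
      apply ha
      have : a ^ 2 = 0 := by linear_combination h0
      exact pow_eq_zero_iff (n := 2) (by norm_num) |>.mp this
    · apply noroot (-a / b)
      have key : (-a/b)^2 - t*(-a/b) + 1 = (a^2 + a*b*t + b^2)/b^2 := by
        field_simp
        ring
      rw [key, h0, zero_div]
  refine ⟨?_, ?_, ?_⟩
  · -- existence
    intro g
    have hdetG : ((g : Matrix (Fin 2) (Fin 2) F)).det ≠ 0 :=
      ((Matrix.isUnit_iff_isUnit_det _).mp g.isUnit).ne_zero
    set G := (g : Matrix (Fin 2) (Fin 2) F) with hG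
    set a := G 0 0 - t * G 1 0 with ha
    set b := G 1 0 with hb
    have hNne : a^2 + a*b*t + b^2 ≠ 0 := by
      apply hnorm
      rintro ⟨h1, h2⟩
      apply hdetG
      rw [Matrix.det_fin_two]
      have hG00 : G 0 0 = 0 := by linear_combination h1 + t * h2
      rw [hG00, ← hb, h2]
      ring
    set N := a^2 + a*b*t + b^2 with hN
    have hτdet : (!![a + b*t, -b; b, a] : Matrix (Fin 2) (Fin 2) F).det ≠ 0 := by
      rw [Matrix.det_fin_two_of]
      intro h; apply hNne; linear_combination h
    obtain ⟨τ, hτ⟩ := (Matrix.isUnit_iff_isUnit_det _).mpr hτdet.isUnit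
    set αv : F := G.det / N with hαv
    have hαne : αv ≠ 0 := div_ne_zero hdetG hNne
    have hDdet : (Matrix.diagonal ![αv, 1] : Matrix (Fin 2) (Fin 2) F).det ≠ 0 := by
      rw [aux_diag, Matrix.det_fin_two_of]
      simpa using hαne
    obtain ⟨D, hD⟩ := (Matrix.isUnit_iff_isUnit_det _).mpr hDdet.isUnit
    have hgrp : τ * D * ((τ * D)⁻¹ * g) = g := by group
    have hmul : (τ : Matrix (Fin 2) (Fin 2) F) * Matrix.diagonal ![αv, 1] *
        ((((τ * D)⁻¹ * g) : (Matrix (Fin 2) (Fin 2) F)ˣ) : Matrix (Fin 2) (Fin 2) F) = G := by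
      rw [← hD, ← Units.val_mul, ← Units.val_mul, hgrp]
    refine ⟨τ, (τ * D)⁻¹ * g, Units.mk0 αv hαne, ⟨a, b, by rw [hτ, hγ, aux_smul_form]⟩, ?_, ?_⟩
    · -- p ∈ P₁
      set P := ((((τ * D)⁻¹ * g) : (Matrix (Fin 2) (Fin 2) F)ˣ) : Matrix (Fin 2) (Fin 2) F) with hP
      rw [hτ, aux_torus_diag] at hmul
      have e0 : (a + b*t)*αv * P 0 0 + (-b) * P 1 0 = G 0 0 := by
        have := congrArg (fun M => M 0 0) hmul
        simpa [Matrix.mul_apply, Fin.sum_univ_two] using this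
      have e1 : b*αv * P 0 0 + a * P 1 0 = G 1 0 := by
        have := congrArg (fun M => M 1 0) hmul
        simpa [Matrix.mul_apply, Fin.sum_univ_two] using this
      have hP10 : P 1 0 = 0 := by
        have key : N * P 1 0 = 0 := by
          rw [hN]
          linear_combination (a + t*b) * e1 - b * e0 + b * ha + (a + t * b) * hb
        exact (mul_eq_zero.mp key).resolve_left hNne
      have hPdet : P.det = 1 := by
        have hdet := congrArg Matrix.det hmul
        rw [Matrix.det_mul, Matrix.det_fin_two_of] at hdet
        have hMdet : (a + b*t)*αv * a - (-b) * (b*αv) = N * αv := by rw [hN]; ring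
        rw [hMdet] at hdet
        have hNα : N * αv = G.det := by
          rw [hαv]; field_simp
        rw [hNα] at hdet
        have : G.det * P.det = G.det * 1 := by rw [mul_one]; exact hdet
        exact mul_left_cancel₀ hdetG this
      exact ⟨hP10, hPdet⟩
    · -- equation
      show G = _
      rw [Units.val_mk0, ← hD, ← Units.val_mul, ← Units.val_mul, hgrp]
  · -- square class uniqueness
    intro τ τ' p p' α α' hτT hτ'T hpP hp'P heq
    obtain ⟨a, b, hτ⟩ := hτT
    obtain ⟨a', b', hτ'⟩ := hτ'T
    rw [hγ, aux_smul_form] at hτ hτ'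
    obtain ⟨hp10, hpdet⟩ := hpP
    obtain ⟨hp'10, hp'det⟩ := hp'P
    set x := (p : Matrix (Fin 2) (Fin 2) F) 0 0 with hx
    set x' := (p' : Matrix (Fin 2) (Fin 2) F) 0 0 with hx'
    have hxne : x ≠ 0 := by
      rw [Matrix.det_fin_two, hp10] at hpdet
      intro h; rw [← hx, h] at hpdet; simp at hpdet
    have hx'ne : x' ≠ 0 := by
      rw [Matrix.det_fin_two, hp'10] at hp'det
      intro h; rw [← hx', h] at hp'det; simp at hp'det
    have hαne : (α:F) ≠ 0 := α.ne_zero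
    have hα'ne : (α':F) ≠ 0 := α'.ne_zero
    rw [hτ, hτ', aux_torus_diag, aux_torus_diag] at heq
    have e0 : (a + b*t)*(α:F) * x = (a' + b'*t)*(α':F) * x' := by
      have := congrArg (fun M => M 0 0) heq
      simpa [Matrix.mul_apply, Fin.sum_univ_two, hp10, hp'10, ← hx, ← hx'] using this
    have e1 : b*(α:F) * x = b'*(α':F) * x' := by
      have := congrArg (fun M => M 1 0) heq
      simpa [Matrix.mul_apply, Fin.sum_univ_two, hp10, hp'10, ← hx, ← hx'] using this
    have hdet := congrArg Matrix.det heq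
    rw [Matrix.det_mul, Matrix.det_mul, Matrix.det_fin_two_of, Matrix.det_fin_two_of,
      hpdet, hp'det, mul_one, mul_one] at hdet
    have hNne : a^2 + a*b*t + b^2 ≠ 0 := by
      have hdτ : ((τ : Matrix (Fin 2) (Fin 2) F)).det ≠ 0 :=
        ((Matrix.isUnit_iff_isUnit_det _).mp τ.isUnit).ne_zero
      rw [hτ, Matrix.det_fin_two_of] at hdτ
      intro h; apply hdτ; linear_combination h
    have hlden : x'*(α':F) ≠ 0 := mul_ne_zero hx'ne hα'ne
    obtain ⟨lam, hkey⟩ : ∃ l : F, l * (x' * (α':F)) = x * (α:F) :=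
      ⟨(x*(α:F))/(x'*(α':F)), by field_simp⟩
    have hb' : b' = lam * b := by
      apply mul_right_cancel₀ hlden
      linear_combination -e1 - b * hkey
    have ha' : a' = lam * a := by
      apply mul_right_cancel₀ hlden
      linear_combination -e0 - a * hkey - t * (x'*(α':F)) * hb' - t * b * hkey
    have hαα : (α:F) = lam^2 * (α':F) := by
      have h2 : (a^2 + a*b*t + b^2) * (α:F)
          = (a^2 + a*b*t + b^2) * (lam^2 * (α':F)) := by
        linear_combination hdet + ((α':F))*(a' + lam*a + t*lam*b) * ha'
          + ((α':F))*(t*a' + b' + lam*b) * hb'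
      exact mul_left_cancel₀ hNne h2
    have hlamne : lam ≠ 0 := by
      intro h
      rw [h, zero_mul] at hkey
      exact mul_ne_zero hxne hαne hkey.symm
    refine ⟨Units.mk0 lam⁻¹ (inv_ne_zero hlamne), ?_⟩
    rw [Units.val_mk0, hαα]
    field_simp
  · -- bijection part
    intro α p p' hpP hp'P
    obtain ⟨hp10, hpdet⟩ := hpP
    obtain ⟨hp'10, hp'det⟩ := hp'P
    have hαne : (α:F) ≠ 0 := α.ne_zero
    constructor
    · rintro ⟨τ, ⟨a, b, hτ⟩, heq⟩
      rw [hγ, aux_smul_form] at hτ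
      rw [hτ, aux_torus_diag] at heq
      have e1 : (1:F) * (p' : Matrix (Fin 2) (Fin 2) F) 1 0
          = b*(α:F) * (p : Matrix (Fin 2) (Fin 2) F) 0 0 + a * (p : Matrix (Fin 2) (Fin 2) F) 1 0 := by
        have := congrArg (fun M => M 1 0) heq
        simpa [aux_diag, Matrix.mul_apply, Fin.sum_univ_two] using this
      rw [hp10, hp'10] at e1
      have hxne : (p : Matrix (Fin 2) (Fin 2) F) 0 0 ≠ 0 := by
        rw [Matrix.det_fin_two, hp10] at hpdet
        intro h; rw [h] at hpdet; simp at hpdet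
      have hb : b = 0 := by
        have : b * ((α:F) * (p : Matrix (Fin 2) (Fin 2) F) 0 0) = 0 := by linear_combination -e1
        rcases mul_eq_zero.mp this with h | h
        · exact h
        · exact absurd h (mul_ne_zero hαne hxne)
      subst hb
      have hτ2 : (τ : Matrix (Fin 2) (Fin 2) F) = a • (1 : Matrix (Fin 2) (Fin 2) F) := by
        rw [hτ]
        ext i j
        fin_cases i <;> fin_cases j <;> simp [Matrix.one_apply]
      rw [← aux_torus_diag, ← hτ, hτ2] at heq
      have heq2 : Matrix.diagonal ![(α:F), 1] * (p' : Matrix (Fin 2) (Fin 2) F)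
          = Matrix.diagonal ![(α:F), 1] * (a • (p : Matrix (Fin 2) (Fin 2) F)) := by
        rw [heq, Matrix.mul_smul, Matrix.smul_mul, Matrix.smul_mul, Matrix.one_mul]
      have hinv : Invertible (Matrix.diagonal ![(α:F), 1] : Matrix (Fin 2) (Fin 2) F) := by
        apply Matrix.invertibleOfIsUnitDet
        rw [aux_diag, Matrix.det_fin_two_of]
        simpa using hαne.isUnit
      have hPP : (p' : Matrix (Fin 2) (Fin 2) F) = a • (p : Matrix (Fin 2) (Fin 2) F) :=
        (Matrix.mul_right_injective_of_invertible _) heq2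
      have ha2 : a^2 = 1 := by
        have hdp := hp'det
        rw [hPP, Matrix.det_smul, hpdet] at hdp
        simpa using hdp
      have hfac : (a - 1) * (a + 1) = 0 := by linear_combination ha2
      rcases mul_eq_zero.mp hfac with h | h
      · left
        rw [hPP, sub_eq_zero.mp h, one_smul]
      · right
        have ha1 : a = -1 := by linear_combination h
        rw [hPP, ha1, neg_smul, one_smul]
    · rintro (h | h)
      · refine ⟨1, ⟨1, 0, ?_⟩, ?_⟩
        · simp
        · rw [h, Units.val_one, one_mul]
      · refine ⟨-1, ⟨-1, 0, ?_⟩, ?_⟩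
        · rw [hγ, aux_smul_form]
          ext i j
          fin_cases i <;> fin_cases j <;> simp
        · rw [h, Units.val_neg, Units.val_one, Matrix.mul_neg, Matrix.neg_mul, Matrix.neg_mul,
            Matrix.one_mul]
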